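/- Let A be an N×N primitive nonnegative matrix with Perron–Frobenius eigenvalue λ, fix a state k, and let B be the matrix obtained from A by replacing the k-th row and the k-th column by zeroes. Then for all states i, j, the sequence λ^{−n}(B^n)(i,j) tends to 0 as n → ∞. -/

import Mathlib

/-- Let `A` be a primitive nonnegative matrix with Perron–Frobenius eigenvalue
`lam`, fix a state `k`, and let `B` be the matrix obtained from `A` by filling
with zeroes the `k`-th row and the `k`-th column.  Then for all states `i, j`,
`lam⁻ⁿ (Bⁿ) i j → 0` as `n → ∞`. -/
theorem inv_pow_mul_zeroed_matrix_pow_tendsto_zero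
    {N : ℕ} (A : Matrix (Fin N) (Fin N) ℝ)
    (hA_nonneg : ∀ i j, 0 ≤ A i j)
    (hA_prim : ∃ m : ℕ, 0 < m ∧ ∀ i j, 0 < (A ^ m) i j)
    (lam : ℝ) (u : Fin N → ℝ)
    (hlam_pos : 0 < lam)
    (hu_pos : ∀ i, 0 < u i)
    (hu_sum : ∑ i, u i = 1)
    (hu_eig : ∀ j, ∑ i, u i * A i j = lam * u j)
    (k : Fin N)
    (B : Matrix (Fin N) (Fin N) ℝ)
    (hB : ∀ i j, B i j = if i = k ∨ j = k then 0 else A i j) :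
    ∀ i j, Filter.Tendsto (fun n : ℕ => lam⁻¹ ^ n * (B ^ n) i j)
      Filter.atTop (nhds 0) := by
  intro i j
  obtain ⟨m, hm, hAm⟩ := hA_prim
  -- basic entrywise facts
  have hBnn : ∀ a b, 0 ≤ B a b := by
    intro a b; rw [hB]; split
    · exact le_refl 0
    · exact hA_nonneg a b
  have hBle : ∀ a b, B a b ≤ A a b := by
    intro a b; rw [hB]; split
    · exact hA_nonneg a b
    · exact le_refl _
  have hpow_nn : ∀ (n : ℕ) a b, 0 ≤ (B ^ n) a b := by
    intro n
    induction n with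
    | zero => intro a b; simp [Matrix.one_apply]; positivity
    | succ n ih =>
      intro a b
      rw [pow_succ, Matrix.mul_apply]
      exact Finset.sum_nonneg fun l _ => mul_nonneg (ih a l) (hBnn l b)
  have hpow_le : ∀ (n : ℕ) a b, (B ^ n) a b ≤ (A ^ n) a b := by
    intro n
    induction n with
    | zero => intro a b; simp
    | succ n ih =>
      intro a b
      rw [pow_succ, pow_succ, Matrix.mul_apply, Matrix.mul_apply]
      refine Finset.sum_le_sum fun l _ => ?_
      exact mul_le_mul (ih a l) (hBle l b) (hBnn l b)
        ((hpow_nn n a l).trans (ih a l))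
  have hBrowk : ∀ b, B k b = 0 := by
    intro b; rw [hB]; simp
  have hrowk : ∀ b, (B ^ m) k b = 0 := by
    intro b
    obtain ⟨m', rfl⟩ : ∃ m', m = m' + 1 := ⟨m - 1, (Nat.succ_pred_eq_of_pos hm).symm⟩
    rw [pow_succ', Matrix.mul_apply]
    exact Finset.sum_eq_zero fun l _ => by rw [hBrowk l, zero_mul]
  -- the weighted row vector w n = uᵀ Bⁿ
  set w : ℕ → Fin N → ℝ := fun n b => ∑ a, u a * (B ^ n) a b with hw
  have hw0 : ∀ b, w 0 b = u b := by
    intro b; simp [hw, Matrix.one_apply, mul_ite]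
  have hwnn : ∀ n b, 0 ≤ w n b :=
    fun n b => Finset.sum_nonneg fun a _ => mul_nonneg (hu_pos a).le (hpow_nn n a b)
  have hwadd : ∀ (p q : ℕ) b, w (p + q) b = ∑ l, w p l * (B ^ q) l b := by
    intro p q b
    simp only [hw, pow_add, Matrix.mul_apply, Finset.mul_sum, Finset.sum_mul]
    rw [Finset.sum_comm]
    exact Finset.sum_congr rfl fun l _ => Finset.sum_congr rfl fun a _ => by ring
  -- uᵀ Aⁿ = λⁿ uᵀ
  have hueig : ∀ (n : ℕ) b, ∑ a, u a * (A ^ n) a b = lam ^ n * u b := by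
    intro n
    induction n with
    | zero => intro b; simp [Matrix.one_apply, mul_ite]
    | succ n ih =>
      intro b
      simp only [pow_succ, Matrix.mul_apply]
      calc ∑ a, u a * ∑ l, (A ^ n) a l * A l b
          = ∑ l, (∑ a, u a * (A ^ n) a l) * A l b := by
            simp only [Finset.mul_sum, Finset.sum_mul]
            rw [Finset.sum_comm]
            exact Finset.sum_congr rfl fun l _ => Finset.sum_congr rfl fun a _ => by ring
        _ = ∑ l, lam ^ n * (u l * A l b) := by
            refine Finset.sum_congr rfl fun l _ => ?_; rw [ih l]; ring
        _ = lam ^ n * (lam * u b) := by rw [← Finset.mul_sum, hu_eig b]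
        _ = lam ^ (n + 1) * u b := by ring
  have hwle : ∀ (n : ℕ) b, w n b ≤ lam ^ n * u b := by
    intro n b
    calc w n b ≤ ∑ a, u a * (A ^ n) a b :=
          Finset.sum_le_sum fun a _ =>
            mul_le_mul_of_nonneg_left (hpow_le n a b) (hu_pos a).le
      _ = lam ^ n * u b := hueig n b
  -- strict inequality at time m
  have hwm_lt : ∀ b, w m b < lam ^ m * u b := by
    intro b
    rw [← hueig m b]
    refine Finset.sum_lt_sum (fun a _ =>
      mul_le_mul_of_nonneg_left (hpow_le m a b) (hu_pos a).le) ⟨k, Finset.mem_univ k, ?_⟩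
    rw [hrowk b, mul_zero]
    exact mul_pos (hu_pos k) (hAm k b)
  -- the contraction factor
  have hNe : (Finset.univ : Finset (Fin N)).Nonempty := ⟨j, Finset.mem_univ j⟩
  set θ : ℝ := Finset.univ.sup' hNe (fun b => w m b / (lam ^ m * u b)) with hθ
  have hθlt : θ < 1 := by
    rw [hθ, Finset.sup'_lt_iff]
    intro b _
    exact (div_lt_one (mul_pos (pow_pos hlam_pos m) (hu_pos b))).2 (hwm_lt b)
  have hθnn : 0 ≤ θ := by
    refine le_trans ?_ (Finset.le_sup' (fun b => w m b / (lam ^ m * u b)) (Finset.mem_univ j))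
    exact div_nonneg (hwnn m j) (mul_pos (pow_pos hlam_pos m) (hu_pos j)).le
  have hθbd : ∀ b, w m b ≤ θ * (lam ^ m * u b) := by
    intro b
    have h1 : w m b / (lam ^ m * u b) ≤ θ :=
      Finset.le_sup' (fun b => w m b / (lam ^ m * u b)) (Finset.mem_univ b)
    have h2 : (0:ℝ) < lam ^ m * u b := mul_pos (pow_pos hlam_pos m) (hu_pos b)
    calc w m b = (w m b / (lam ^ m * u b)) * (lam ^ m * u b) := by rw [div_mul_cancel₀ _ h2.ne']
      _ ≤ θ * (lam ^ m * u b) := mul_le_mul_of_nonneg_right h1 h2.le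
  -- iterate the contraction
  have hq : ∀ (q : ℕ) b, w (q * m) b ≤ θ ^ q * lam ^ (q * m) * u b := by
    intro q
    induction q with
    | zero => intro b; simp [hw0 b]
    | succ q ih =>
      intro b
      have step : w (q * m + m) b = ∑ l, w (q * m) l * (B ^ m) l b := hwadd (q * m) m b
      have h1 : w (q * m + m) b ≤ θ ^ q * lam ^ (q * m) * w m b := by
        rw [step]
        calc ∑ l, w (q * m) l * (B ^ m) l b
            ≤ ∑ l, θ ^ q * lam ^ (q * m) * u l * (B ^ m) l b :=
              Finset.sum_le_sum fun l _ =>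
                mul_le_mul_of_nonneg_right (ih l) (hpow_nn m l b)
          _ = θ ^ q * lam ^ (q * m) * ∑ l, u l * (B ^ m) l b := by
              rw [Finset.mul_sum]
              exact Finset.sum_congr rfl fun l _ => by ring
          _ = θ ^ q * lam ^ (q * m) * w m b := rfl
      have h2 : θ ^ q * lam ^ (q * m) * w m b ≤
          θ ^ q * lam ^ (q * m) * (θ * (lam ^ m * u b)) :=
        mul_le_mul_of_nonneg_left (hθbd b)
          (mul_nonneg (pow_nonneg hθnn q) (pow_pos hlam_pos (q * m)).le)
      have : w ((q + 1) * m) b = w (q * m + m) b := by ring_nf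
      rw [this]
      refine (h1.trans h2).trans (le_of_eq ?_)
      rw [pow_succ, Nat.succ_mul, pow_add]
      ring
  -- general bound
  have hbound : ∀ (n : ℕ) b, w n b ≤ θ ^ (n / m) * lam ^ n * u b := by
    intro n b
    have hn : (n / m) * m + n % m = n := by
      rw [Nat.mul_comm]; exact Nat.div_add_mod n m
    have hsplit : w n b = ∑ l, w ((n / m) * m) l * (B ^ (n % m)) l b := by
      conv_lhs => rw [← hn]
      exact hwadd _ _ b
    calc w n b ≤ θ ^ (n / m) * lam ^ ((n / m) * m) * w (n % m) b := by
          rw [hsplit]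
          calc ∑ l, w ((n / m) * m) l * (B ^ (n % m)) l b
              ≤ ∑ l, θ ^ (n / m) * lam ^ ((n / m) * m) * u l * (B ^ (n % m)) l b :=
                Finset.sum_le_sum fun l _ =>
                  mul_le_mul_of_nonneg_right (hq (n / m) l) (hpow_nn _ l b)
            _ = θ ^ (n / m) * lam ^ ((n / m) * m) * ∑ l, u l * (B ^ (n % m)) l b := by
                rw [Finset.mul_sum]
                exact Finset.sum_congr rfl fun l _ => by ring
      _ ≤ θ ^ (n / m) * lam ^ ((n / m) * m) * (lam ^ (n % m) * u b) :=
          mul_le_mul_of_nonneg_left (hwle (n % m) b)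
            (mul_nonneg (pow_nonneg hθnn _) (pow_pos hlam_pos _).le)
      _ = θ ^ (n / m) * lam ^ n * u b := by
          have hlp : lam ^ ((n / m) * m) * lam ^ (n % m) = lam ^ n := by
            rw [← pow_add, hn]
          rw [← hlp]; ring
  -- entrywise bound for the target sequence
  have hentry : ∀ n : ℕ, lam⁻¹ ^ n * (B ^ n) i j ≤ θ ^ (n / m) * (u j / u i) := by
    intro n
    have h1 : u i * (B ^ n) i j ≤ w n j :=
      Finset.single_le_sum (f := fun a => u a * (B ^ n) a j)
        (fun a _ => mul_nonneg (hu_pos a).le (hpow_nn n a j)) (Finset.mem_univ i)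
    have h2 : u i * (B ^ n) i j ≤ θ ^ (n / m) * lam ^ n * u j := h1.trans (hbound n j)
    have hui : (0:ℝ) < u i := hu_pos i
    have hln : (0:ℝ) < lam ^ n := pow_pos hlam_pos n
    have h3 : (B ^ n) i j ≤ (θ ^ (n / m) * lam ^ n * u j) / u i := by
      rw [le_div_iff₀ hui, mul_comm]; exact h2
    calc lam⁻¹ ^ n * (B ^ n) i j
        ≤ lam⁻¹ ^ n * ((θ ^ (n / m) * lam ^ n * u j) / u i) :=
          mul_le_mul_of_nonneg_left h3 (by positivity)
      _ = θ ^ (n / m) * (u j / u i) := by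
          rw [inv_pow]; field_simp
  -- squeeze
  have hnonneg : ∀ n : ℕ, 0 ≤ lam⁻¹ ^ n * (B ^ n) i j :=
    fun n => mul_nonneg (pow_nonneg (inv_nonneg.mpr hlam_pos.le) n) (hpow_nn n i j)
  have hdivtop : Filter.Tendsto (fun n : ℕ => n / m) Filter.atTop Filter.atTop := by
    refine Filter.tendsto_atTop_atTop.2 fun b => ⟨b * m, fun n hn => ?_⟩
    exact (Nat.le_div_iff_mul_le hm).2 hn
  have hupper : Filter.Tendsto (fun n : ℕ => θ ^ (n / m) * (u j / u i))
      Filter.atTop (nhds 0) := by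
    have h0 : Filter.Tendsto (fun q : ℕ => θ ^ q) Filter.atTop (nhds 0) :=
      tendsto_pow_atTop_nhds_zero_of_lt_one hθnn hθlt
    have h1 := (h0.comp hdivtop).mul_const (u j / u i)
    simpa using h1
  refine tendsto_of_tendsto_of_tendsto_of_le_of_le tendsto_const_nhds hupper
    (fun n => hnonneg n) (fun n => hentry n)
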